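/- Let q ≥ 4 be an integer and ε ∈ (0, 1/2]. Then for every rate R > log₂(q/2), the reliability function of the typewriter channel satisfies E(R) ≤ (1/2) log₂(1/α_ε). -/

import Mathlib

set_option linter.unusedSectionVars false
set_option linter.unusedVariables false
set_option maxHeartbeats 1000000



/-- The typewriter channel transition probabilities on `ZMod q`. -/
noncomputable def W (q : ℕ) (ε : ℝ) (y x : ZMod q) : ℝ :=
  if y = x then 1 - ε else if y = x + 1 then ε else 0

/-- `α_ε = √(ε(1-ε))`. -/
noncomputable def alphaE (ε : ℝ) : ℝ := Real.sqrt (ε * (1 - ε))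

/-- The `n`-fold memoryless extension `Wⁿ(y|x) = ∏ₖ W(yₖ|xₖ)`. -/
noncomputable def Wn (q : ℕ) [NeZero q] (n : ℕ) (ε : ℝ) (y x : Fin n → ZMod q) : ℝ :=
  ∏ k, W q ε (y k) (x k)

/-- `Pe(M,n)`: the smallest average error probability over all encoders
`f : Fin M → (ZMod q)ⁿ` and decoders `φ : (ZMod q)ⁿ → Fin M`. -/
noncomputable def Pe (q : ℕ) [NeZero q] (ε : ℝ) (M n : ℕ) : ℝ :=
  sInf {p : ℝ | ∃ f : Fin M → (Fin n → ZMod q), ∃ φ : (Fin n → ZMod q) → Fin M,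
    p = (1 / M) * ∑ m : Fin M, ∑ y : Fin n → ZMod q,
      if φ y = m then 0 else Wn q n ε y (f m)}

/-- The reliability function
`E(R) = limsup_{n→∞} (1/n) log₂ (1 / Pe(⌈2^{nR}⌉, n))`. -/
noncomputable def EReliability (q : ℕ) [NeZero q] (ε : ℝ) (R : ℝ) : ℝ :=
  Filter.limsup (fun n : ℕ =>
    (1 / (n : ℝ)) * Real.logb 2 (1 / Pe q ε (⌈(2 : ℝ) ^ ((n : ℝ) * R)⌉₊) n))
    Filter.atTop

/-- Binary entropy function (base 2), extended by `log 0 = 0`. -/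
noncomputable def h2 (x : ℝ) : ℝ := -(x * Real.logb 2 x) - (1 - x) * Real.logb 2 (1 - x)

section
variable (q : ℕ) [NeZero q] (ε : ℝ)

lemma W_nonneg (hε : 0 ≤ ε) (hε' : ε ≤ 1) (y x : ZMod q) : 0 ≤ W q ε y x := by
  unfold W; split_ifs <;> linarith

lemma Wn_nonneg (hε : 0 ≤ ε) (hε' : ε ≤ 1) (n : ℕ) (y x : Fin n → ZMod q) :
    0 ≤ Wn q n ε y x :=
  Finset.prod_nonneg fun _ _ => W_nonneg q ε hε hε' _ _

lemma zmod_one_ne_zero (hq : 2 ≤ q) : (1 : ZMod q) ≠ 0 := by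
  haveI : Fact (1 < q) := ⟨by omega⟩
  exact one_ne_zero

lemma W_row_sum (hq : 2 ≤ q) (x : ZMod q) : ∑ y, W q ε y x = 1 := by
  have h10 := zmod_one_ne_zero q hq
  have hx : x + 1 ≠ x := by
    simpa [add_eq_left] using h10
  have : ∀ y : ZMod q, W q ε y x
      = (if y = x then 1 - ε else 0) + (if y = x + 1 then ε else 0) := by
    intro y
    unfold W
    by_cases h1 : y = x
    · subst h1; simp [hx, Ne.symm hx]
    · by_cases h2 : y = x + 1 <;> simp [h1, h2, h10]
  simp only [this, Finset.sum_add_distrib, Finset.sum_ite_eq', Finset.mem_univ, if_true]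
  ring

lemma Wn_row_sum (hq : 2 ≤ q) (n : ℕ) (x : Fin n → ZMod q) :
    ∑ y : Fin n → ZMod q, Wn q n ε y x = 1 := by
  unfold Wn
  rw [← Fintype.prod_sum fun k j => W q ε j (x k)]
  simp [W_row_sum q ε hq]

end

lemma pair_count {ι : Type*} [DecidableEq ι] (T : Finset ι) (g : ι → Bool) :
    2 * ∑ m₁ ∈ T, ∑ m₂ ∈ T, (if g m₁ ≠ g m₂ then 1 else 0) ≤ T.card * T.card := by
  classical
  set A := T.filter (fun m => g m = true) with hA
  set B := T.filter (fun m => ¬ g m = true) with hB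
  have hcard : A.card + B.card = T.card := Finset.card_filter_add_card_filter_not _
  have inner : ∀ m₁ ∈ T, (∑ m₂ ∈ T, (if g m₁ ≠ g m₂ then 1 else 0))
      = if g m₁ = true then B.card else A.card := by
    intro m₁ _
    by_cases h : g m₁ = true
    · rw [if_pos h, hB, Finset.card_filter]
      apply Finset.sum_congr rfl
      intro m₂ _
      by_cases h2 : g m₂ = true <;> simp [h, h2]
    · rw [if_neg h, hA, Finset.card_filter]
      apply Finset.sum_congr rfl
      intro m₂ _
      by_cases h2 : g m₂ = true <;> simp [h, h2]
  rw [Finset.sum_congr rfl inner, Finset.sum_ite, Finset.sum_const, Finset.sum_const]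
  simp only [smul_eq_mul, ← hA, ← hB, ← hcard]
  zify
  nlinarith [sq_nonneg ((A.card : ℤ) - B.card)]

lemma plotkin {n : ℕ} {ι : Type*} [DecidableEq ι] (T : Finset ι) (c : ι → Fin n → Bool)
    (ht : 2 ≤ T.card) :
    ∃ m₁ ∈ T, ∃ m₂ ∈ T, m₁ ≠ m₂ ∧
      2 * (T.card - 1) * (Finset.univ.filter fun k => c m₁ k ≠ c m₂ k).card ≤ n * T.card := by
  classical
  set t := T.card with hT
  by_contra hcon
  push_neg at hcon
  set D := fun (m₁ m₂ : ι) => (Finset.univ.filter fun k => c m₁ k ≠ c m₂ k).card with hD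
  have key : 2 * ∑ m₁ ∈ T, ∑ m₂ ∈ T, D m₁ m₂ ≤ n * (t * t) := by
    have hrw : ∑ m₁ ∈ T, ∑ m₂ ∈ T, D m₁ m₂
        = ∑ k : Fin n, ∑ m₁ ∈ T, ∑ m₂ ∈ T, (if c m₁ k ≠ c m₂ k then 1 else 0) := by
      have h1 : ∀ m₁ ∈ T, ∀ m₂ ∈ T, D m₁ m₂
          = ∑ k : Fin n, (if c m₁ k ≠ c m₂ k then 1 else 0) := by
        intro m₁ _ m₂ _
        simp only [hD, Finset.card_filter]
      calc ∑ m₁ ∈ T, ∑ m₂ ∈ T, D m₁ m₂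
          = ∑ m₁ ∈ T, ∑ m₂ ∈ T, ∑ k : Fin n, (if c m₁ k ≠ c m₂ k then 1 else 0) :=
            Finset.sum_congr rfl (fun m₁ h₁ => Finset.sum_congr rfl (fun m₂ h₂ => h1 m₁ h₁ m₂ h₂))
        _ = ∑ m₁ ∈ T, ∑ k : Fin n, ∑ m₂ ∈ T, (if c m₁ k ≠ c m₂ k then 1 else 0) :=
            Finset.sum_congr rfl (fun _ _ => Finset.sum_comm)
        _ = ∑ k : Fin n, ∑ m₁ ∈ T, ∑ m₂ ∈ T, (if c m₁ k ≠ c m₂ k then 1 else 0) :=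
            Finset.sum_comm
    rw [hrw, Finset.mul_sum]
    calc ∑ k : Fin n, 2 * ∑ m₁ ∈ T, ∑ m₂ ∈ T, (if c m₁ k ≠ c m₂ k then 1 else 0)
        ≤ ∑ _k : Fin n, t * t := Finset.sum_le_sum (fun k _ => pair_count T (fun m => c m k))
      _ = n * (t * t) := by simp [Finset.sum_const, Finset.card_univ]
  have lower : t * ((t - 1) * (n * t + 1)) ≤ (t-1) * (2 * ∑ m₁ ∈ T, ∑ m₂ ∈ T, D m₁ m₂) := by
    have h2 : ∀ m₁ ∈ T, (t - 1) * (n * t + 1) ≤ ∑ m₂ ∈ T, (2 * (t-1) * D m₁ m₂) := by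
      intro m₁ hm₁
      calc (t - 1) * (n * t + 1) = ∑ _m₂ ∈ T.erase m₁, (n * t + 1) := by
            rw [Finset.sum_const, Finset.card_erase_of_mem hm₁, smul_eq_mul]
        _ ≤ ∑ m₂ ∈ T.erase m₁, (2 * (t-1) * D m₁ m₂) := by
            apply Finset.sum_le_sum
            intro m₂ hm₂
            exact Nat.succ_le_of_lt (hcon m₁ hm₁ m₂ (Finset.mem_of_mem_erase hm₂)
              (Ne.symm (Finset.ne_of_mem_erase hm₂)))
        _ ≤ ∑ m₂ ∈ T, (2 * (t-1) * D m₁ m₂) :=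
            Finset.sum_le_sum_of_subset (Finset.erase_subset _ _)
    calc t * ((t - 1) * (n * t + 1)) = ∑ _m₁ ∈ T, ((t - 1) * (n * t + 1)) := by
          rw [Finset.sum_const, smul_eq_mul, hT]
      _ ≤ ∑ m₁ ∈ T, ∑ m₂ ∈ T, (2 * (t-1) * D m₁ m₂) := Finset.sum_le_sum h2
      _ = (t-1) * (2 * ∑ m₁ ∈ T, ∑ m₂ ∈ T, D m₁ m₂) := by
          rw [Finset.mul_sum, Finset.mul_sum]
          apply Finset.sum_congr rfl; intro m₁ _
          rw [Finset.mul_sum, Finset.mul_sum]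
          apply Finset.sum_congr rfl; intro m₂ _
          ring
  have upper : (t-1) * (2 * ∑ m₁ ∈ T, ∑ m₂ ∈ T, D m₁ m₂) ≤ (t-1) * (n * (t*t)) :=
    Nat.mul_le_mul_left _ key
  have final : t * ((t - 1) * (n * t + 1)) ≤ (t-1) * (n * (t*t)) := le_trans lower upper
  have hexp : t * ((t - 1) * (n * t + 1)) = (t-1) * (n * (t * t)) + t * (t-1) := by ring
  rw [hexp] at final
  have ht1 : 1 ≤ t - 1 := by omega
  nlinarith
section
variable (q : ℕ) [NeZero q]

lemma cube_fiber_card (hq : 2 ≤ q) {n : ℕ} (x : Fin n → ZMod q) :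
    (Finset.univ.filter fun a : Fin n → ZMod q => ∀ k, x k = a k ∨ x k = a k + 1).card
      = 2 ^ n := by
  classical
  haveI : Fact (1 < q) := ⟨by omega⟩
  have h10 : (1 : ZMod q) ≠ 0 := one_ne_zero
  have himg : (Finset.univ.filter fun a : Fin n → ZMod q => ∀ k, x k = a k ∨ x k = a k + 1)
      = Finset.univ.image (fun e : Fin n → Bool => fun k => x k - (if e k then 1 else 0)) := by
    ext a
    simp only [Finset.mem_filter, Finset.mem_univ, true_and, Finset.mem_image]
    constructor
    · intro h
      refine ⟨fun k => decide (x k = a k + 1), ?_⟩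
      funext k
      rcases h k with h1 | h2
      · have hd : ¬ (x k = a k + 1) := by
          intro hc
          rw [h1] at hc
          exact (left_ne_add.mpr h10) hc
        simp [hd, ← h1]
      · simp [h2]
    · rintro ⟨e, rfl⟩
      intro k
      by_cases he : e k
      · right; simp [he]
      · left; simp [he]
  rw [himg, Finset.card_image_of_injective _ ?_, Finset.card_univ]
  · simp
  · intro e e' hee
    funext k
    have := congrFun hee k
    by_cases h1 : e k <;> by_cases h2 : e' k <;> simp [h1, h2] at this ⊢
    · exact absurd (by linear_combination (this : _)) h10

lemma cube_pigeon (hq : 2 ≤ q) {n M : ℕ} (f : Fin M → Fin n → ZMod q)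
    (S : Finset (Fin M)) :
    ∃ a : Fin n → ZMod q, S.card * 2 ^ n
      ≤ q ^ n * (S.filter fun m => ∀ k, f m k = a k ∨ f m k = a k + 1).card := by
  classical
  have hcount : ∑ a : Fin n → ZMod q,
      (S.filter fun m => ∀ k, f m k = a k ∨ f m k = a k + 1).card = S.card * 2 ^ n := by
    have h1 : ∀ a : Fin n → ZMod q,
        (S.filter fun m => ∀ k, f m k = a k ∨ f m k = a k + 1).card
          = ∑ m ∈ S, (if (∀ k, f m k = a k ∨ f m k = a k + 1) then 1 else 0) := by
      intro a; rw [Finset.card_filter]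
    simp only [h1]
    rw [Finset.sum_comm]
    have h2 : ∀ m ∈ S, ∑ a : Fin n → ZMod q,
        (if (∀ k, f m k = a k ∨ f m k = a k + 1) then 1 else 0) = 2 ^ n := by
      intro m _
      rw [← Finset.card_filter]
      exact cube_fiber_card q hq (f m)
    rw [Finset.sum_congr rfl h2, Finset.sum_const, smul_eq_mul]
  have hcardA : (Finset.univ : Finset (Fin n → ZMod q)).card = q ^ n := by
    rw [Finset.card_univ]
    simp [ZMod.card]
  have hne : (Finset.univ : Finset (Fin n → ZMod q)).Nonempty := Finset.univ_nonempty
  have hsum : ∑ _a : Fin n → ZMod q, S.card * 2 ^ n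
      ≤ ∑ a : Fin n → ZMod q, q ^ n *
        (S.filter fun m => ∀ k, f m k = a k ∨ f m k = a k + 1).card := by
    rw [Finset.sum_const, smul_eq_mul, hcardA, ← Finset.mul_sum, hcount]
  obtain ⟨a, _, ha⟩ := Finset.exists_le_of_sum_le hne hsum
  exact ⟨a, ha⟩

end
section
variable (q : ℕ) [NeZero q] (ε : ℝ)

lemma Wn_split (hq : 2 ≤ q) {n : ℕ} (y x : Fin n → ZMod q) (E : Finset (Fin n))
    (c : Fin n → Bool) (a : Fin n → ZMod q)
    (hx : ∀ k, x k = a k + (if c k then 1 else 0))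
    (hy : ∀ k ∈ E, y k = a k + 1) :
    Wn q n ε y x = (1-ε) ^ (E.filter (fun k => c k = true)).card
      * ε ^ (E.filter (fun k => ¬ c k = true)).card
      * ∏ k ∈ Eᶜ, W q ε (y k) (x k) := by
  classical
  have h10 := zmod_one_ne_zero q hq
  have hstep : ∀ k ∈ E, W q ε (y k) (x k) = if c k then 1 - ε else ε := by
    intro k hk
    have hyk := hy k hk
    by_cases hck : c k
    · have : x k = a k + 1 := by rw [hx k, if_pos hck]
      rw [if_pos hck]
      unfold W
      rw [if_pos (by rw [hyk, this])]
    · have hxk : x k = a k := by rw [hx k, if_neg hck]; ring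
      rw [if_neg hck]
      unfold W
      have hne : y k ≠ x k := by
        rw [hyk, hxk]
        simpa [add_eq_left] using h10
      rw [if_neg hne, if_pos (by rw [hyk, hxk])]
  have := Finset.prod_mul_prod_compl E (fun k => W q ε (y k) (x k))
  unfold Wn
  rw [← this, Finset.prod_congr rfl hstep, Finset.prod_ite, Finset.prod_const,
    Finset.prod_const]

lemma pair_bound (hq : 2 ≤ q) (hε : 0 < ε) (hε' : ε ≤ 1/2) {n M : ℕ} {r : ℕ}
    (f : Fin M → Fin n → ZMod q) (φ : (Fin n → ZMod q) → Fin M)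
    (a : Fin n → ZMod q) (c₁ c₂ : Fin n → Bool) (m₁ m₂ : Fin M) (hne : m₁ ≠ m₂)
    (hc1 : ∀ k, f m₁ k = a k + (if c₁ k then 1 else 0))
    (hc2 : ∀ k, f m₂ k = a k + (if c₂ k then 1 else 0))
    (hrp : (Finset.univ.filter fun k => c₁ k = false ∧ c₂ k = true).card = r)
    (hrm : (Finset.univ.filter fun k => c₁ k = true ∧ c₂ k = false).card = r) :
    (ε * (1 - ε)) ^ r
      ≤ (∑ y : Fin n → ZMod q, if φ y = m₁ then 0 else Wn q n ε y (f m₁))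
        + (∑ y : Fin n → ZMod q, if φ y = m₂ then 0 else Wn q n ε y (f m₂)) := by
  classical
  have hε1 : ε ≤ 1 := by linarith
  have hε0 : (0:ℝ) ≤ ε := le_of_lt hε
  set E : Finset (Fin n) := Finset.univ.filter (fun k => ¬ c₁ k = c₂ k) with hE
  set fk : Fin n → ZMod q → ℝ :=
    fun k b => if c₁ k = c₂ k then W q ε b (f m₁ k) else (if b = a k + 1 then 1 else 0) with hfk
  -- E.filter identities
  have hEfilter1 : E.filter (fun k => c₁ k = true) = Finset.univ.filter (fun k => c₁ k = true ∧ c₂ k = false) := by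
    ext k
    simp only [hE, Finset.mem_filter, Finset.mem_univ, true_and, Finset.filter_filter]
    constructor
    · rintro ⟨h1, h2⟩
      exact ⟨h2, by revert h1 h2; cases c₁ k <;> cases c₂ k <;> simp⟩
    · rintro ⟨h1, h2⟩
      exact ⟨by rw [h1, h2]; simp, h1⟩
  have hEfilter2 : E.filter (fun k => ¬ c₁ k = true) = Finset.univ.filter (fun k => c₁ k = false ∧ c₂ k = true) := by
    ext k
    simp only [hE, Finset.mem_filter, Finset.mem_univ, true_and, Finset.filter_filter]
    constructor
    · rintro ⟨h1, h2⟩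
      refine ⟨by simp at h2; exact h2, by revert h1 h2; cases c₁ k <;> cases c₂ k <;> simp⟩
    · rintro ⟨h1, h2⟩
      exact ⟨by rw [h1, h2]; simp, by simp [h1]⟩
  have hEfilter3 : E.filter (fun k => c₂ k = true) = Finset.univ.filter (fun k => c₁ k = false ∧ c₂ k = true) := by
    ext k
    simp only [hE, Finset.mem_filter, Finset.mem_univ, true_and, Finset.filter_filter]
    constructor
    · rintro ⟨h1, h2⟩
      exact ⟨by revert h1 h2; cases c₁ k <;> cases c₂ k <;> simp, h2⟩
    · rintro ⟨h1, h2⟩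
      exact ⟨by rw [h1, h2]; simp, h2⟩
  have hEfilter4 : E.filter (fun k => ¬ c₂ k = true) = Finset.univ.filter (fun k => c₁ k = true ∧ c₂ k = false) := by
    ext k
    simp only [hE, Finset.mem_filter, Finset.mem_univ, true_and, Finset.filter_filter]
    constructor
    · rintro ⟨h1, h2⟩
      refine ⟨by revert h1 h2; cases c₁ k <;> cases c₂ k <;> simp, by simp at h2; exact h2⟩
    · rintro ⟨h1, h2⟩
      exact ⟨by rw [h1, h2]; simp, by simp [h2]⟩
  -- claim 1 : total mass of fk is 1
  have claim1 : ∑ y : Fin n → ZMod q, ∏ k, fk k (y k) = 1 := by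
    rw [← Fintype.prod_sum fk]
    rw [Finset.prod_eq_one]
    intro k _
    by_cases h : c₁ k = c₂ k
    · simp only [hfk, if_pos h]
      exact W_row_sum q ε hq (f m₁ k)
    · simp only [hfk, if_neg h]
      simp
  -- claim 2 : pointwise bound
  have claim2 : ∀ y : Fin n → ZMod q, (ε * (1 - ε)) ^ r * ∏ k, fk k (y k)
      ≤ (if φ y = m₁ then 0 else Wn q n ε y (f m₁))
        + (if φ y = m₂ then 0 else Wn q n ε y (f m₂)) := by
    intro y
    have hrhs_nonneg : 0 ≤ (if φ y = m₁ then 0 else Wn q n ε y (f m₁))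
        + (if φ y = m₂ then 0 else Wn q n ε y (f m₂)) := by
      apply add_nonneg <;>
      · split_ifs
        · exact le_refl 0
        · exact Wn_nonneg q ε hε0 hε1 n _ _
    by_cases hy : ∀ k ∈ E, y k = a k + 1
    · -- on the common support : both probabilities equal the target
      have hprod_fk : ∏ k, fk k (y k) = ∏ k ∈ Eᶜ, W q ε (y k) (f m₁ k) := by
        rw [← Finset.prod_mul_prod_compl E (fun k => fk k (y k))]
        have h1 : ∏ k ∈ E, fk k (y k) = 1 := by
          apply Finset.prod_eq_one
          intro k hk
          have hkE : ¬ c₁ k = c₂ k := by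
            simpa [hE, Finset.mem_filter] using hk
          simp only [hfk, if_neg hkE, if_pos (hy k hk)]
        have h2 : ∏ k ∈ Eᶜ, fk k (y k) = ∏ k ∈ Eᶜ, W q ε (y k) (f m₁ k) := by
          apply Finset.prod_congr rfl
          intro k hk
          have hkE : c₁ k = c₂ k := by
            have := Finset.mem_compl.mp hk
            simpa [hE, Finset.mem_filter] using this
          simp only [hfk, if_pos hkE]
        rw [h1, h2, one_mul]
      have hP : Wn q n ε y (f m₁) = (1-ε)^r * ε^r * ∏ k ∈ Eᶜ, W q ε (y k) (f m₁ k) := by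
        rw [Wn_split q ε hq y (f m₁) E c₁ a hc1 hy, hEfilter1, hEfilter2, hrm, hrp]
      have hQ : Wn q n ε y (f m₂) = (1-ε)^r * ε^r * ∏ k ∈ Eᶜ, W q ε (y k) (f m₁ k) := by
        rw [Wn_split q ε hq y (f m₂) E c₂ a hc2 hy, hEfilter3, hEfilter4, hrp, hrm]
        congr 1
        apply Finset.prod_congr rfl
        intro k hk
        have hkE : c₁ k = c₂ k := by
          have := Finset.mem_compl.mp hk
          simpa [hE, Finset.mem_filter] using this
        congr 1
        rw [hc1 k, hc2 k, hkE]
      have hval : (ε * (1 - ε)) ^ r * ∏ k, fk k (y k)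
          = (1-ε)^r * ε^r * ∏ k ∈ Eᶜ, W q ε (y k) (f m₁ k) := by
        rw [hprod_fk, mul_pow]
        ring
      by_cases hphi : φ y = m₁
      · rw [if_pos hphi, if_neg (fun h => hne (by rw [← hphi, h])), zero_add, hval, ← hQ]
      · rw [if_neg hphi, hval, ← hP]
        have : 0 ≤ (if φ y = m₂ then 0 else Wn q n ε y (f m₂)) := by
          split_ifs
          · exact le_refl 0
          · exact Wn_nonneg q ε hε0 hε1 n _ _
        linarith
    · -- off the common support : lhs is zero
      push_neg at hy
      obtain ⟨k0, hk0E, hk0⟩ := hy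
      have : ∏ k, fk k (y k) = 0 := by
        apply Finset.prod_eq_zero (Finset.mem_univ k0)
        have hkE : ¬ c₁ k0 = c₂ k0 := by
          simpa [hE, Finset.mem_filter] using hk0E
        simp only [hfk, if_neg hkE, if_neg hk0]
      rw [this, mul_zero]
      exact hrhs_nonneg
  -- sum up
  calc (ε * (1 - ε)) ^ r = (ε * (1 - ε)) ^ r * ∑ y : Fin n → ZMod q, ∏ k, fk k (y k) := by
        rw [claim1, mul_one]
    _ = ∑ y : Fin n → ZMod q, (ε * (1 - ε)) ^ r * ∏ k, fk k (y k) := by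
        rw [Finset.mul_sum]
    _ ≤ ∑ y : Fin n → ZMod q, ((if φ y = m₁ then 0 else Wn q n ε y (f m₁))
          + (if φ y = m₂ then 0 else Wn q n ε y (f m₂))) :=
        Finset.sum_le_sum (fun y _ => claim2 y)
    _ = _ := Finset.sum_add_distrib

end
section
variable {n : ℕ}

lemma weight_split (c₁ c₂ : Fin n → Bool) :
    (Finset.univ.filter fun k => c₁ k = true).card
      = (Finset.univ.filter fun k => c₁ k = true ∧ c₂ k = true).card
        + (Finset.univ.filter fun k => c₁ k = true ∧ c₂ k = false).card := by
  classical
  rw [← Finset.card_filter_add_card_filter_not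
    (s := Finset.univ.filter fun k => c₁ k = true) (p := fun k => c₂ k = true)]
  rw [Finset.filter_filter, Finset.filter_filter]
  congr 2
  apply Finset.filter_congr; intro k _
  simp [Bool.not_eq_true]

lemma weight_eq_card (c₁ c₂ : Fin n → Bool)
    (hw : (Finset.univ.filter fun k => c₁ k = true).card
        = (Finset.univ.filter fun k => c₂ k = true).card) :
    (Finset.univ.filter fun k => c₁ k = false ∧ c₂ k = true).card
      = (Finset.univ.filter fun k => c₁ k = true ∧ c₂ k = false).card := by
  classical
  have h1 := weight_split c₁ c₂
  have h2 := weight_split c₂ c₁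
  have hsym : (Finset.univ.filter fun k => c₂ k = true ∧ c₁ k = true).card
      = (Finset.univ.filter fun k => c₁ k = true ∧ c₂ k = true).card := by
    congr 1; apply Finset.filter_congr; intro k _; simp [and_comm]
  have hsym2 : (Finset.univ.filter fun k => c₂ k = true ∧ c₁ k = false).card
      = (Finset.univ.filter fun k => c₁ k = false ∧ c₂ k = true).card := by
    congr 1; apply Finset.filter_congr; intro k _; simp [and_comm]
  omega

lemma dist_split (c₁ c₂ : Fin n → Bool) :
    (Finset.univ.filter fun k => c₁ k ≠ c₂ k).card
      = (Finset.univ.filter fun k => c₁ k = true ∧ c₂ k = false).card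
        + (Finset.univ.filter fun k => c₁ k = false ∧ c₂ k = true).card := by
  classical
  rw [← Finset.card_filter_add_card_filter_not
    (s := Finset.univ.filter fun k => c₁ k ≠ c₂ k) (p := fun k => c₁ k = true)]
  rw [Finset.filter_filter, Finset.filter_filter]
  congr 1
  · congr 1; apply Finset.filter_congr; intro k _
    cases h1 : c₁ k <;> cases h2 : c₂ k <;> simp
  · congr 1; apply Finset.filter_congr; intro k _
    cases h1 : c₁ k <;> cases h2 : c₂ k <;> simp

end
lemma percode (q : ℕ) [NeZero q] (ε : ℝ) (hq : 2 ≤ q) (hε : 0 < ε) (hε' : ε ≤ 1/2)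
    {n M K : ℕ} (hK : 2 ≤ K) (hgrow : q ^ n * (2 * (n+1) * K) ≤ M * 2 ^ n)
    (f : Fin M → Fin n → ZMod q) (φ : (Fin n → ZMod q) → Fin M) :
    (ε * (1 - ε)) ^ (((n:ℝ)/4) * ((K:ℝ)/((K:ℝ)-1)))
      ≤ 4 * ((1 / (M:ℝ)) * ∑ m : Fin M, ∑ y : Fin n → ZMod q,
          if φ y = m then 0 else Wn q n ε y (f m)) := by
  classical
  have hε1 : ε ≤ 1 := by linarith
  have hε0 : (0:ℝ) ≤ ε := le_of_lt hε
  have hβ0 : (0:ℝ) < ε * (1 - ε) := by nlinarith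
  have hβ1 : ε * (1 - ε) ≤ 1 := by nlinarith
  have hM : 0 < M := by
    rcases Nat.eq_zero_or_pos M with h | h
    · exfalso
      rw [h, zero_mul] at hgrow
      have h1 : 0 < q ^ n * (2 * (n+1) * K) := by positivity
      omega
    · exact h
  set lam : Fin M → ℝ := fun m => ∑ y : Fin n → ZMod q,
    if φ y = m then 0 else Wn q n ε y (f m) with hlam
  set PeC : ℝ := (1 / (M:ℝ)) * ∑ m : Fin M, lam m with hPeC
  have hlam_nonneg : ∀ m, 0 ≤ lam m := by
    intro m
    apply Finset.sum_nonneg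
    intro y _
    split_ifs
    · exact le_refl 0
    · exact Wn_nonneg q ε hε0 hε1 n _ _
  have hsum_lam : ∑ m : Fin M, lam m = M * PeC := by
    rw [hPeC]
    field_simp
  have hPe_nonneg : 0 ≤ PeC := by
    rw [hPeC]
    apply mul_nonneg (by positivity)
    exact Finset.sum_nonneg fun m _ => hlam_nonneg m
  set S : Finset (Fin M) := Finset.univ.filter (fun m => lam m ≤ 2 * PeC) with hS
  have hScard : M ≤ 2 * S.card := by
    rcases eq_or_lt_of_le hPe_nonneg with h0 | h0
    · have hall : ∀ m, lam m ≤ 2 * PeC := by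
        intro m
        have : ∑ m : Fin M, lam m = 0 := by rw [hsum_lam, ← h0, mul_zero]
        have hz := (Finset.sum_eq_zero_iff_of_nonneg
          (fun m _ => hlam_nonneg m)).mp this m (Finset.mem_univ m)
        rw [hz, ← h0, mul_zero]
      have : S = Finset.univ := by
        apply Finset.eq_univ_of_forall
        intro m
        simp [hS, hall m]
      rw [this, Finset.card_univ, Fintype.card_fin]
      omega
    · have hcompl : (Finset.univ.filter (fun m => ¬ lam m ≤ 2 * PeC)).card + S.card = M := by
        have := Finset.card_filter_add_card_filter_not
          (s := (Finset.univ : Finset (Fin M))) (p := fun m => lam m ≤ 2 * PeC)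
        simpa [hS, Fintype.card_fin, add_comm] using this
      set Sc := Finset.univ.filter (fun m => ¬ lam m ≤ 2 * PeC) with hSc
      have h1 : (Sc.card : ℝ) * (2 * PeC) ≤ ∑ m ∈ Sc, lam m := by
        calc (Sc.card : ℝ) * (2 * PeC) = ∑ _m ∈ Sc, 2 * PeC := by
              rw [Finset.sum_const, nsmul_eq_mul]
          _ ≤ ∑ m ∈ Sc, lam m := by
              apply Finset.sum_le_sum
              intro m hm
              have := (Finset.mem_filter.mp hm).2
              linarith [lt_of_not_ge this]
      have h2 : ∑ m ∈ Sc, lam m ≤ M * PeC := by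
        rw [← hsum_lam]
        exact Finset.sum_le_sum_of_subset_of_nonneg (Finset.subset_univ _)
          (fun m _ _ => hlam_nonneg m)
      have h3 : (Sc.card : ℝ) * 2 ≤ M := by
        have := le_trans h1 h2
        have h4 : (Sc.card : ℝ) * 2 * PeC ≤ (M:ℝ) * PeC := by linarith [this]
        exact le_of_mul_le_mul_right (by linarith [h4]) h0
      have h5 : Sc.card * 2 ≤ M := by exact_mod_cast h3
      omega
  -- cube pigeonhole
  obtain ⟨a, ha⟩ := cube_pigeon q hq f S
  set T₀ := S.filter (fun m => ∀ k, f m k = a k ∨ f m k = a k + 1) with hT₀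
  -- weight pigeonhole
  set c : Fin M → Fin n → Bool := fun m k => decide (f m k = a k + 1) with hc
  set wt : Fin M → ℕ := fun m => (Finset.univ.filter (fun k => c m k = true)).card with hwt
  have hfiber : ∑ w ∈ Finset.range (n+1), (T₀.filter (fun m => wt m = w)).card = T₀.card := by
    rw [← Finset.card_eq_sum_card_fiberwise]
    intro m _
    rw [Finset.mem_coe, Finset.mem_range]
    have : wt m ≤ n := by
      calc wt m ≤ (Finset.univ : Finset (Fin n)).card := Finset.card_filter_le _ _
        _ = n := by simp
    omega
  have hwpigeon : ∃ w ∈ Finset.range (n+1), T₀.card ≤ (n+1) * (T₀.filter (fun m => wt m = w)).card := by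
    have hsum_le : ∑ _w ∈ Finset.range (n+1), T₀.card
        ≤ ∑ w ∈ Finset.range (n+1), (n+1) * (T₀.filter (fun m => wt m = w)).card := by
      apply le_of_eq
      calc ∑ _w ∈ Finset.range (n+1), T₀.card = (n+1) * T₀.card := by
            rw [Finset.sum_const, Finset.card_range, smul_eq_mul]
        _ = ∑ w ∈ Finset.range (n+1), (n+1) * (T₀.filter (fun m => wt m = w)).card := by
            rw [← Finset.mul_sum, hfiber]
    exact Finset.exists_le_of_sum_le (Finset.nonempty_range_iff.mpr (by omega)) hsum_le
  obtain ⟨w, _, hw⟩ := hwpigeon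
  set T := T₀.filter (fun m => wt m = w) with hT
  -- T is large
  have hKT : K ≤ T.card := by
    have hchain : q ^ n * (2 * (n+1)) * K ≤ q ^ n * (2 * (n+1)) * T.card := by
      calc q ^ n * (2 * (n+1)) * K = q ^ n * (2 * (n+1) * K) := by ring
        _ ≤ M * 2 ^ n := hgrow
        _ ≤ (2 * S.card) * 2 ^ n := Nat.mul_le_mul_right _ hScard
        _ = 2 * (S.card * 2 ^ n) := by ring
        _ ≤ 2 * (q ^ n * T₀.card) := Nat.mul_le_mul_left _ ha
        _ ≤ 2 * (q ^ n * ((n+1) * T.card)) := by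
            apply Nat.mul_le_mul_left
            apply Nat.mul_le_mul_left
            exact hw
        _ = q ^ n * (2 * (n+1)) * T.card := by ring
    have hpos : 0 < q ^ n * (2 * (n+1)) := by positivity
    exact Nat.le_of_mul_le_mul_left hchain hpos
  have hT2 : 2 ≤ T.card := le_trans hK hKT
  -- Plotkin
  obtain ⟨m₁, hm₁, m₂, hm₂, hne12, hdist⟩ := plotkin T c hT2
  -- unpack memberships
  have hmem : ∀ m ∈ T, lam m ≤ 2 * PeC ∧ (∀ k, f m k = a k ∨ f m k = a k + 1) ∧ wt m = w := by
    intro m hm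
    have h1 := Finset.mem_filter.mp hm
    have h2 := Finset.mem_filter.mp h1.1
    have h3 := Finset.mem_filter.mp h2.1
    exact ⟨h3.2, h2.2, h1.2⟩
  obtain ⟨hlam1, hcube1, hwt1⟩ := hmem m₁ hm₁
  obtain ⟨hlam2, hcube2, hwt2⟩ := hmem m₂ hm₂
  have h10 : (1 : ZMod q) ≠ 0 := zmod_one_ne_zero q hq
  have hcoord : ∀ m, (∀ k, f m k = a k ∨ f m k = a k + 1) →
      ∀ k, f m k = a k + (if c m k then 1 else 0) := by
    intro m hcube k
    rcases hcube k with h | h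
    · have : c m k = false := by
        simp only [hc, decide_eq_false_iff_not]
        intro hcon
        rw [h] at hcon
        exact (by simpa [add_eq_left] using h10 : a k + 1 ≠ a k) hcon.symm
      rw [this]
      simpa using h
    · have : c m k = true := by simp [hc, h]
      rw [this]
      simpa using h
  -- equal weights give balanced distance
  set r : ℕ := (Finset.univ.filter fun k => c m₁ k = false ∧ c m₂ k = true).card with hr
  have hrm : (Finset.univ.filter fun k => c m₁ k = true ∧ c m₂ k = false).card = r := by
    rw [hr]
    have hww : wt m₁ = wt m₂ := by rw [hwt1, hwt2]
    exact (weight_eq_card (c m₁) (c m₂) (by simpa [hwt] using hww)).symm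
  have hd2r : (Finset.univ.filter fun k => c m₁ k ≠ c m₂ k).card = 2 * r := by
    rw [dist_split (c m₁) (c m₂), hrm, hr]
    ring
  -- pairwise error bound
  have hpair : (ε * (1 - ε)) ^ r ≤ lam m₁ + lam m₂ := by
    apply pair_bound q ε hq hε hε' f φ a (c m₁) (c m₂) m₁ m₂ hne12
      (hcoord m₁ hcube1) (hcoord m₂ hcube2) hr.symm hrm
  have h4Pe : (ε * (1 - ε)) ^ r ≤ 4 * PeC := by
    calc (ε * (1 - ε)) ^ r ≤ lam m₁ + lam m₂ := hpair
      _ ≤ 2 * PeC + 2 * PeC := add_le_add hlam1 hlam2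
      _ = 4 * PeC := by ring
  -- exponent comparison
  have hrbound : (r : ℝ) ≤ ((n:ℝ)/4) * ((K:ℝ)/((K:ℝ)-1)) := by
    have ht1 : (1:ℕ) ≤ T.card := by omega
    have hdistR : 4 * ((T.card : ℝ) - 1) * r ≤ (n:ℝ) * T.card := by
      rw [hd2r] at hdist
      have := Nat.cast_le (α := ℝ) |>.mpr hdist
      push_cast [Nat.cast_sub ht1] at this
      linarith
    have hKR : (2:ℝ) ≤ (K:ℝ) := by exact_mod_cast hK
    have hKTR : (K:ℝ) ≤ (T.card : ℝ) := by exact_mod_cast hKT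
    have htpos : (0:ℝ) < T.card := by
      have : (0:ℕ) < T.card := by omega
      exact_mod_cast this
    have hKm1 : (0:ℝ) < (K:ℝ) - 1 := by linarith
    rw [div_mul_div_comm, le_div_iff₀ (by positivity)]
    nlinarith [mul_nonneg (by linarith : (0:ℝ) ≤ (K:ℝ))
        (by linarith [hdistR] : (0:ℝ) ≤ (n:ℝ) * T.card - 4*((T.card:ℝ)-1)*r),
      mul_nonneg (mul_nonneg (by norm_num) (Nat.cast_nonneg r) : (0:ℝ) ≤ 4*(r:ℝ)) (by linarith : (0:ℝ) ≤ (T.card:ℝ) - K),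
      htpos]
  have hfinal : (ε * (1 - ε)) ^ (((n:ℝ)/4) * ((K:ℝ)/((K:ℝ)-1))) ≤ (ε * (1 - ε)) ^ r := by
    rw [← Real.rpow_natCast (ε * (1 - ε)) r]
    exact Real.rpow_le_rpow_of_exponent_ge hβ0 hβ1 hrbound
  calc (ε * (1 - ε)) ^ (((n:ℝ)/4) * ((K:ℝ)/((K:ℝ)-1))) ≤ (ε * (1 - ε)) ^ r := hfinal
    _ ≤ 4 * PeC := h4Pe
lemma Pe_le_one (q : ℕ) [NeZero q] (ε : ℝ) (hq : 2 ≤ q) (hε : 0 < ε) (hε' : ε ≤ 1/2)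
    {M n : ℕ} (hM : 0 < M) : Pe q ε M n ≤ 1 := by
  have hε1 : ε ≤ 1 := by linarith
  have hε0 : (0:ℝ) ≤ ε := le_of_lt hε
  unfold Pe
  have hbdd : BddBelow {p : ℝ | ∃ f : Fin M → (Fin n → ZMod q), ∃ φ : (Fin n → ZMod q) → Fin M,
      p = (1 / M) * ∑ m : Fin M, ∑ y : Fin n → ZMod q,
        if φ y = m then 0 else Wn q n ε y (f m)} := by
    refine ⟨0, ?_⟩
    rintro p ⟨f, φ, rfl⟩
    apply mul_nonneg (by positivity)
    apply Finset.sum_nonneg; intro m _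
    apply Finset.sum_nonneg; intro y _
    split_ifs
    · exact le_refl 0
    · exact Wn_nonneg q ε hε0 hε1 n _ _
  set f₀ : Fin M → (Fin n → ZMod q) := fun _ _ => 0 with hf₀
  set φ₀ : (Fin n → ZMod q) → Fin M := fun _ => ⟨0, hM⟩ with hφ₀
  have hmem : (1 / (M:ℝ)) * ∑ m : Fin M, ∑ y : Fin n → ZMod q,
      (if φ₀ y = m then 0 else Wn q n ε y (f₀ m)) ∈ {p : ℝ | ∃ f : Fin M → (Fin n → ZMod q),
        ∃ φ : (Fin n → ZMod q) → Fin M, p = (1 / M) * ∑ m : Fin M, ∑ y : Fin n → ZMod q,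
          if φ y = m then 0 else Wn q n ε y (f m)} := ⟨f₀, φ₀, rfl⟩
  refine le_trans (csInf_le hbdd hmem) ?_
  have hin : ∀ m : Fin M, ∑ y : Fin n → ZMod q,
      (if φ₀ y = m then 0 else Wn q n ε y (f₀ m)) ≤ 1 := by
    intro m
    calc ∑ y : Fin n → ZMod q, (if φ₀ y = m then 0 else Wn q n ε y (f₀ m))
        ≤ ∑ y : Fin n → ZMod q, Wn q n ε y (f₀ m) := by
          apply Finset.sum_le_sum
          intro y _
          split_ifs
          · exact Wn_nonneg q ε hε0 hε1 n _ _
          · exact le_refl _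
      _ = 1 := Wn_row_sum q ε hq n (f₀ m)
  calc (1 / (M:ℝ)) * ∑ m : Fin M, ∑ y : Fin n → ZMod q,
      (if φ₀ y = m then 0 else Wn q n ε y (f₀ m))
      ≤ (1 / (M:ℝ)) * ∑ _m : Fin M, (1:ℝ) := by
        apply mul_le_mul_of_nonneg_left _ (by positivity)
        exact Finset.sum_le_sum (fun m _ => hin m)
    _ = 1 := by
        rw [Finset.sum_const, Finset.card_univ, Fintype.card_fin, nsmul_eq_mul, mul_one]
        field_simp
  done

lemma Pe_lower (q : ℕ) [NeZero q] (ε : ℝ) (hq : 2 ≤ q) (hε : 0 < ε) (hε' : ε ≤ 1/2)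
    {n M K : ℕ} (hK : 2 ≤ K) (hgrow : q ^ n * (2 * (n+1) * K) ≤ M * 2 ^ n) :
    (ε * (1 - ε)) ^ (((n:ℝ)/4) * ((K:ℝ)/((K:ℝ)-1))) / 4 ≤ Pe q ε M n := by
  unfold Pe
  apply le_csInf
  · exact ⟨_, (fun _ _ => 0), (fun _ => ⟨0, by
      rcases Nat.eq_zero_or_pos M with h | h
      · exfalso
        rw [h, zero_mul] at hgrow
        have h1 : 0 < q ^ n * (2 * (n+1) * K) := by positivity
        omega
      · exact h⟩), rfl⟩
  · rintro p ⟨f, φ, rfl⟩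
    have := percode q ε hq hε hε' hK hgrow f φ
    linarith
theorem stmt7 (q : ℕ) [NeZero q] (hq : 4 ≤ q)
    (ε : ℝ) (hε : 0 < ε) (hε' : ε ≤ 1 / 2)
    (R : ℝ) (hR : Real.logb 2 ((q : ℝ) / 2) < R) :
    EReliability q ε R ≤ (1 / 2) * Real.logb 2 (1 / alphaE ε) := by
  have hq2 : 2 ≤ q := by omega
  have hε1 : ε ≤ 1 := by linarith
  have hε0 : (0:ℝ) ≤ ε := le_of_lt hε
  have hβ0 : (0:ℝ) < ε * (1 - ε) := by nlinarith
  have hβ1 : ε * (1 - ε) ≤ 1 := by nlinarith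
  set L : ℝ := Real.logb 2 (1 / (ε * (1 - ε))) with hLdef
  have hL0 : 0 ≤ L := by
    apply Real.logb_nonneg one_lt_two
    rw [le_div_iff₀ hβ0]
    linarith
  have hRHS : (1 / 2) * Real.logb 2 (1 / alphaE ε) = L / 4 := by
    rw [hLdef]
    unfold alphaE
    simp only [one_div, Real.logb, Real.log_inv, Real.log_sqrt hβ0.le]
    ring
  rw [hRHS]
  unfold EReliability
  set u : ℕ → ℝ := fun n =>
    (1 / (n : ℝ)) * Real.logb 2 (1 / Pe q ε (⌈(2 : ℝ) ^ ((n : ℝ) * R)⌉₊) n) with hu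
  have hq0 : (0:ℝ) < q := by positivity
  have hρ : 1 < (2:ℝ) ^ R * 2 / q := by
    rw [lt_div_iff₀ hq0, one_mul]
    have h1 : (q:ℝ)/2 < (2:ℝ) ^ R := by
      calc (q:ℝ)/2 = (2:ℝ) ^ (Real.logb 2 ((q:ℝ)/2)) :=
            (Real.rpow_logb (by norm_num) (by norm_num) (by positivity)).symm
      _ < (2:ℝ) ^ R := Real.rpow_lt_rpow_of_exponent_lt one_lt_two hR
    linarith
  set ρ : ℝ := (2:ℝ) ^ R * 2 / q with hρdef
  have hρ0 : 0 < ρ := by positivity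
  have hgrow_ev : ∀ K : ℕ, 2 ≤ K → ∀ᶠ n : ℕ in Filter.atTop,
      q ^ n * (2 * (n+1) * K) ≤ (⌈(2 : ℝ) ^ ((n : ℝ) * R)⌉₊) * 2 ^ n := by
    intro K hK
    have hinv0 : (0:ℝ) ≤ 1/ρ := by positivity
    have hinv1 : 1/ρ < 1 := by rw [div_lt_one hρ0]; exact hρ
    have htend := tendsto_pow_const_mul_const_pow_of_lt_one 1 hinv0 hinv1
    have hev : ∀ᶠ n : ℕ in Filter.atTop, (n:ℝ) ^ 1 * (1/ρ) ^ n < 1/(4*K) :=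
      htend.eventually (eventually_lt_nhds (by positivity))
    filter_upwards [hev, Filter.eventually_ge_atTop 1] with n hn hn1
    have hρn0 : (0:ℝ) < ρ ^ n := by positivity
    have hρn : 4 * (K:ℝ) * n ≤ ρ ^ n := by
      rw [pow_one, one_div, inv_pow, ← div_eq_mul_inv] at hn
      have := (div_lt_div_iff₀ hρn0 (by positivity : (0:ℝ) < 4*(K:ℝ))).mp hn
      linarith
    have hnR : (0:ℝ) < n := by exact_mod_cast hn1
    have hreal : (q:ℝ) ^ n * (2 * ((n:ℝ)+1) * K) ≤ (2:ℝ) ^ ((n:ℝ)*R) * 2 ^ n := by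
      have h2 : 2 * ((n:ℝ)+1) * K ≤ 4 * (K:ℝ) * n := by
        have hK0 : (2:ℝ) ≤ K := by exact_mod_cast hK
        have hn1R : (1:ℝ) ≤ n := by exact_mod_cast hn1
        nlinarith [mul_nonneg (by linarith : (0:ℝ) ≤ (K:ℝ)) (by linarith : (0:ℝ) ≤ (n:ℝ) - 1)]
      have hqρ : (q:ℝ) ^ n * ρ ^ n = (2:ℝ) ^ ((n:ℝ)*R) * 2 ^ n := by
        rw [← mul_pow]
        have : (q:ℝ) * ρ = (2:ℝ)^R * 2 := by
          rw [hρdef]; field_simp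
        rw [this, mul_pow]
        congr 1
        rw [← Real.rpow_natCast ((2:ℝ)^R) n, ← Real.rpow_mul (by norm_num), mul_comm]
      calc (q:ℝ) ^ n * (2 * ((n:ℝ)+1) * K) ≤ (q:ℝ) ^ n * (4 * (K:ℝ) * n) := by
            apply mul_le_mul_of_nonneg_left h2 (by positivity)
        _ ≤ (q:ℝ) ^ n * ρ ^ n := mul_le_mul_of_nonneg_left (le_trans le_rfl hρn) (by positivity)
        _ = (2:ℝ) ^ ((n:ℝ)*R) * 2 ^ n := hqρ
    have hceil : (2:ℝ) ^ ((n:ℝ)*R) ≤ (⌈(2 : ℝ) ^ ((n : ℝ) * R)⌉₊ : ℝ) := Nat.le_ceil _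
    rw [← @Nat.cast_le ℝ]
    push_cast
    calc (q:ℝ) ^ n * (2 * ((n:ℝ)+1) * K) ≤ (2:ℝ) ^ ((n:ℝ)*R) * 2 ^ n := hreal
      _ ≤ (⌈(2 : ℝ) ^ ((n : ℝ) * R)⌉₊ : ℝ) * 2 ^ n := by
          apply mul_le_mul_of_nonneg_right hceil (by positivity)
  have keyK : ∀ K : ℕ, 2 ≤ K → ∀ᶠ n : ℕ in Filter.atTop,
      u n ≤ 2/(n:ℝ) + ((K:ℝ)/((K:ℝ)-1)) * (L/4) ∧ 0 ≤ u n := by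
    intro K hK
    have hKR : (2:ℝ) ≤ (K:ℝ) := by exact_mod_cast hK
    filter_upwards [hgrow_ev K hK, Filter.eventually_ge_atTop 1] with n hgrow hn1
    set M := ⌈(2:ℝ) ^ ((n:ℝ)*R)⌉₊ with hM
    have hM0 : 0 < M := Nat.ceil_pos.mpr (by positivity)
    have hlow := Pe_lower q ε hq2 hε hε' hK hgrow
    have hup := Pe_le_one q ε hq2 hε hε' (M := M) (n := n) hM0
    set e : ℝ := ((n:ℝ)/4) * ((K:ℝ)/((K:ℝ)-1)) with he
    have hbe0 : (0:ℝ) < (ε*(1-ε)) ^ e := Real.rpow_pos_of_pos hβ0 _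
    have hPe0 : 0 < Pe q ε M n := lt_of_lt_of_le (by positivity) hlow
    have hn0 : (0:ℝ) < n := by exact_mod_cast hn1
    have hun : u n = (1/(n:ℝ)) * Real.logb 2 (1 / Pe q ε M n) := rfl
    constructor
    · rw [hun]
      have hinv : 1 / Pe q ε M n ≤ 4 / (ε*(1-ε)) ^ e := by
        rw [div_le_div_iff₀ hPe0 hbe0]
        linarith
      have hlogb : Real.logb 2 (1 / Pe q ε M n) ≤ Real.logb 2 (4 / (ε*(1-ε))^e) :=
        Real.logb_le_logb_of_le one_lt_two (by positivity) hinv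
      have h4 : Real.logb 2 (4:ℝ) = 2 := by
        rw [show (4:ℝ) = (2:ℝ)^(2:ℝ) by
          rw [show (2:ℝ) = ((2:ℕ):ℝ) by norm_num, Real.rpow_natCast]; norm_num]
        exact Real.logb_rpow (b := 2) (by norm_num) (by norm_num)
      have hlog4 : Real.logb 2 (4 / (ε*(1-ε))^e) = 2 + e * L := by
        rw [Real.logb_div (by norm_num) (ne_of_gt hbe0)]
        have hβe : Real.logb 2 ((ε*(1-ε))^e) = e * Real.logb 2 (ε*(1-ε)) :=
          Real.logb_rpow_eq_mul_logb_of_pos hβ0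
        have hLneg : Real.logb 2 (ε*(1-ε)) = -L := by
          rw [hLdef, one_div, Real.logb_inv]; ring
        rw [h4, hβe, hLneg]; ring
      calc (1/(n:ℝ)) * Real.logb 2 (1 / Pe q ε M n)
          ≤ (1/(n:ℝ)) * (2 + e * L) := by
            apply mul_le_mul_of_nonneg_left _ (by positivity)
            rw [← hlog4]; exact hlogb
        _ = 2/(n:ℝ) + ((K:ℝ)/((K:ℝ)-1)) * (L/4) := by
            rw [he]; field_simp
    · rw [hun]
      apply mul_nonneg (by positivity)
      apply Real.logb_nonneg one_lt_two
      rw [le_div_iff₀ hPe0]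
      linarith
  apply le_of_forall_pos_le_add
  intro γ hγ
  obtain ⟨K₀, hK₀⟩ := exists_nat_gt (L/(2*γ))
  set K : ℕ := max 2 (K₀ + 1) with hKdef
  have hK : 2 ≤ K := le_max_left _ _
  have hKR : (2:ℝ) ≤ (K:ℝ) := by exact_mod_cast hK
  have hKb : L/(2*γ) ≤ (K:ℝ) - 1 := by
    have h1 : K₀ + 1 ≤ K := le_max_right _ _
    have h2 : (K₀:ℝ) + 1 ≤ (K:ℝ) := by exact_mod_cast h1
    linarith
  have hterm : ((K:ℝ)/((K:ℝ)-1)) * (L/4) ≤ L/4 + γ/2 := by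
    have hK1 : (0:ℝ) < (K:ℝ) - 1 := by linarith
    rw [div_mul_eq_mul_div, div_le_iff₀ hK1]
    have : L/4 ≤ (γ/2) * ((K:ℝ)-1) := by
      calc L/4 = (γ/2) * (L/(2*γ)) := by field_simp; ring
        _ ≤ (γ/2) * ((K:ℝ)-1) := by
            apply mul_le_mul_of_nonneg_left hKb (by positivity)
    nlinarith
  have h2n : ∀ᶠ n : ℕ in Filter.atTop, 2/(n:ℝ) ≤ γ/2 := by
    have := tendsto_const_div_atTop_nhds_zero_nat (2:ℝ)
    exact this.eventually (eventually_le_nhds (by positivity))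
  have hev : ∀ᶠ n in Filter.atTop, u n ≤ L/4 + γ := by
    filter_upwards [keyK K hK, h2n] with n h1 h2
    calc u n ≤ 2/(n:ℝ) + ((K:ℝ)/((K:ℝ)-1)) * (L/4) := h1.1
      _ ≤ γ/2 + (L/4 + γ/2) := add_le_add h2 hterm
      _ = L/4 + γ := by ring
  have hcb : Filter.IsCoboundedUnder (· ≤ ·) Filter.atTop u :=
    Filter.isCoboundedUnder_le_of_eventually_le Filter.atTop (x := 0)
      ((keyK 2 le_rfl).mono fun n h => h.2)
  exact Filter.limsup_le_of_le hcb hev
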